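/- Let R be a commutative noetherian ring, let A be an étale R-algebra (formally étale and of finite presentation over R), let M be an abelian group, and suppose A is graded by M as an R-algebra, i.e. A = ⊕_{m ∈ M} A_m as R-modules with A_m · A_{m'} ⊆ A_{m+m'} and with the image of R contained in A_0. If every homogeneous element of nonzero degree is nilpotent, then A_m = 0 for every m ≠ 0; that is, A is concentrated in degree 0. -/

import Mathlib

universe u

/-- **Algebraic core of Proposition 4.4.** Let `R` be a commutative noetherian ring, `A`
an étale `R`-algebra, and `M` an abelian group.  Suppose `A` is `M`-graded as an
`R`-algebra: `A = ⊕_{m ∈ M} A_m` as `R`-modules, with `A_m · A_{m'} ⊆ A_{m+m'}` and the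
image of `R` contained in `A_0`.  If every homogeneous element of nonzero degree is
nilpotent, then `A_m = 0` for every `m ≠ 0`. -/
theorem stmt_15 {R A : Type u} [CommRing R] [IsNoetherianRing R] [CommRing A]
    [Algebra R A] [Algebra.Etale R A]
    {M : Type*} [AddCommGroup M] [DecidableEq M]
    (𝒜 : M → Submodule R A) (hdec : DirectSum.IsInternal 𝒜)
    (hmul : ∀ m m' : M, ∀ a ∈ 𝒜 m, ∀ b ∈ 𝒜 m', a * b ∈ 𝒜 (m + m'))
    (hR : ∀ r : R, algebraMap R A r ∈ 𝒜 0)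
    (hnil : ∀ m : M, m ≠ 0 → ∀ a ∈ 𝒜 m, IsNilpotent a) :
    ∀ m : M, m ≠ 0 → 𝒜 m = ⊥ := by
  classical
  letI : DirectSum.Decomposition 𝒜 := hdec.chooseDecomposition
  haveI : IsNoetherianRing A := Algebra.FiniteType.isNoetherianRing R A
  -- the ideal generated by homogeneous elements of nonzero degree
  set I : Ideal A := Ideal.span {a : A | ∃ m : M, m ≠ 0 ∧ a ∈ 𝒜 m} with hIdef
  have hmem : ∀ {m : M}, m ≠ 0 → ∀ {x : A}, x ∈ 𝒜 m → x ∈ I := by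
    intro m hm x hx
    exact Ideal.subset_span ⟨m, hm, hx⟩
  have hInil : I ≤ nilradical A := by
    rw [hIdef, Ideal.span_le]
    rintro a ⟨m, hm, ha⟩
    exact hnil m hm a ha
  -- the degree-zero projection
  set π : A → A := fun a => (DirectSum.decompose 𝒜 a 0 : A) with hπdef
  have hπ_add : ∀ a b : A, π (a + b) = π a + π b := by
    intro a b
    simp [hπdef, DirectSum.decompose_add]
  have hπ_zero : π 0 = 0 := by simp [hπdef]
  -- every element is congruent to its degree-zero part mod I
  have hdiff : ∀ a : A, a - π a ∈ I := by
    refine DirectSum.Decomposition.inductionOn 𝒜 ?_ ?_ ?_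
    · simpa [hπ_zero] using I.zero_mem
    · rintro i ⟨x, hx⟩
      by_cases hi : i = 0
      · subst hi
        simp only [hπdef, DirectSum.decompose_of_mem_same 𝒜 hx, sub_self]
        exact I.zero_mem
      · simp only [hπdef, DirectSum.decompose_of_mem_ne 𝒜 hx hi, sub_zero]
        exact hmem hi hx
    · intro a b ha hb
      have : a + b - π (a + b) = (a - π a) + (b - π b) := by rw [hπ_add]; ring
      rw [this]
      exact I.add_mem ha hb
  -- π is multiplicative modulo I^2
  have hkey : ∀ a b : A, π (a * b) - π a * π b ∈ I ^ 2 := by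
    refine DirectSum.Decomposition.inductionOn 𝒜 (motive := fun a => ∀ b : A,
      π (a * b) - π a * π b ∈ I ^ 2) ?_ ?_ ?_
    · intro b
      simpa [hπ_zero] using (I ^ 2).zero_mem
    · rintro i ⟨x, hx⟩
      refine DirectSum.Decomposition.inductionOn 𝒜 (motive := fun b : A =>
        π (x * b) - π x * π b ∈ I ^ 2) ?_ ?_ ?_
      · simpa [hπ_zero] using (I ^ 2).zero_mem
      · rintro j ⟨y, hy⟩
        have hxy : x * y ∈ 𝒜 (i + j) := hmul i j x hx y hy
        by_cases hij : i + j = 0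
        · by_cases hi : i = 0
          · have hj : j = 0 := by rwa [hi, zero_add] at hij
            subst hi; subst hj
            have hxy0 : x * y ∈ 𝒜 0 := by simpa using hxy
            simp only [hπdef, DirectSum.decompose_of_mem_same 𝒜 hx,
              DirectSum.decompose_of_mem_same 𝒜 hy,
              DirectSum.decompose_of_mem_same 𝒜 hxy0, sub_self]
            exact (I ^ 2).zero_mem
          · have hj : j ≠ 0 := by
              intro h; subst h; rw [add_zero] at hij; exact hi hij
            have hxy0 : x * y ∈ 𝒜 0 := by rwa [hij] at hxy
            simp only [hπdef, DirectSum.decompose_of_mem_same 𝒜 hxy0,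
              DirectSum.decompose_of_mem_ne 𝒜 hx hi, zero_mul, sub_zero]
            rw [pow_two]
            exact Ideal.mul_mem_mul (hmem hi hx) (hmem hj hy)
        · have h0 : π (x * y) = 0 := DirectSum.decompose_of_mem_ne 𝒜 hxy hij
          have : i ≠ 0 ∨ j ≠ 0 := by
            by_contra h
            push_neg at h
            exact hij (by rw [h.1, h.2, add_zero])
          rcases this with hi | hj
          · simp only [hπdef] at h0 ⊢
            rw [h0, DirectSum.decompose_of_mem_ne 𝒜 hx hi, zero_mul, sub_zero]
            exact (I ^ 2).zero_mem
          · simp only [hπdef] at h0 ⊢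
            rw [h0, DirectSum.decompose_of_mem_ne 𝒜 hy hj, mul_zero, sub_zero]
            exact (I ^ 2).zero_mem
      · intro b b' hb hb'
        have : π (x * (b + b')) - π x * π (b + b')
            = (π (x * b) - π x * π b) + (π (x * b') - π x * π b') := by
          rw [mul_add, hπ_add, hπ_add]; ring
        rw [this]
        exact (I ^ 2).add_mem hb hb'
    · intro a a' ha ha' b
      have : π ((a + a') * b) - π (a + a') * π b
          = (π (a * b) - π a * π b) + (π (a' * b) - π a' * π b) := by
        rw [add_mul, hπ_add, hπ_add]; ring
      rw [this]
      exact (I ^ 2).add_mem (ha b) (ha' b)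
  have h1mem : (1 : A) ∈ 𝒜 0 := by simpa using hR 1
  -- the projection as an algebra hom into A / I^2
  let mk2 : A →+* A ⧸ I ^ 2 := Ideal.Quotient.mk (I ^ 2)
  let g₂ : A →ₐ[R] A ⧸ I ^ 2 :=
    { toFun := fun a => mk2 (π a)
      map_one' := by
        simp only [hπdef, DirectSum.decompose_of_mem_same 𝒜 h1mem, map_one]
      map_mul' := by
        intro a b
        show mk2 (π (a * b)) = mk2 (π a) * mk2 (π b)
        rw [(Ideal.Quotient.mk_eq_mk_iff_sub_mem _ _).mpr (hkey a b), map_mul]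
      map_zero' := by show mk2 (π 0) = 0; rw [hπ_zero, map_zero]
      map_add' := by intro a b; show mk2 (π (a+b)) = mk2 (π a) + mk2 (π b); rw [hπ_add, map_add]
      commutes' := by
        intro r
        simp only [hπdef, DirectSum.decompose_of_mem_same 𝒜 (hR r)]
        rfl }
  let J : Ideal (A ⧸ I ^ 2) := I.map mk2
  have hJ2 : J ^ 2 = ⊥ := by
    rw [← Ideal.map_pow, Ideal.map_quotient_self]
  have hinj := Algebra.FormallyUnramified.comp_injective (R := R) (A := A) J hJ2
  have heq : (Ideal.Quotient.mkₐ R J).comp (Ideal.Quotient.mkₐ R (I ^ 2))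
      = (Ideal.Quotient.mkₐ R J).comp g₂ := by
    ext a
    simp only [AlgHom.comp_apply, Ideal.Quotient.mkₐ_eq_mk]
    refine (Ideal.Quotient.mk_eq_mk_iff_sub_mem _ _).mpr ?_
    have : (Ideal.Quotient.mk (I ^ 2)) a - g₂ a = mk2 (a - π a) := by
      show _ - mk2 (π a) = _
      rw [map_sub]
    rw [this]
    exact Ideal.mem_map_of_mem mk2 (hdiff a)
  have hg : Ideal.Quotient.mkₐ R (I ^ 2) = g₂ := hinj heq
  have hsub : ∀ a : A, a - π a ∈ I ^ 2 := by
    intro a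
    have := AlgHom.congr_fun hg a
    simp only [Ideal.Quotient.mkₐ_eq_mk] at this
    exact (Ideal.Quotient.mk_eq_mk_iff_sub_mem _ _).mp this
  -- I ≤ I^2, hence I = I^2
  have hle : I ≤ I ^ 2 := by
    rw [hIdef, Ideal.span_le]
    rintro x ⟨m, hm, hx⟩
    have h0 : π x = 0 := DirectSum.decompose_of_mem_ne 𝒜 hx hm
    have := hsub x
    rwa [h0, sub_zero] at this
  have h2 : I ^ 2 = I := le_antisymm (Ideal.pow_le_self two_ne_zero) hle
  have hpow : ∀ k : ℕ, I ^ (k + 1) = I := by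
    intro k
    induction k with
    | zero => exact pow_one I
    | succ n ih => rw [pow_succ, ih, ← pow_two, h2]
  -- nilradical is nilpotent, so I = ⊥
  obtain ⟨n, hn⟩ := IsNoetherianRing.isNilpotent_nilradical A
  have hIbot : I = ⊥ := by
    have h1 : I ^ (n + 1) ≤ (nilradical A) ^ (n + 1) := Ideal.pow_right_mono hInil (n + 1)
    have h2' : (nilradical A) ^ (n + 1) = ⊥ := by
      rw [pow_succ, hn]; simp
    rw [← hpow n]
    rw [h2'] at h1
    exact le_bot_iff.mp h1
  intro m hm
  refine le_antisymm ?_ bot_le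
  intro x hx
  have : x ∈ I := hmem hm hx
  rw [hIbot] at this
  simpa using this
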